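/- Let 𝔄 be an associative supercommutative superalgebra over a field of characteristic zero, let d and ι be odd anti-derivations of 𝔄 with d∘d = 0, and set D = d∘ι + ι∘d. If ω = dζ is exact (ζ homogeneous) and θ is homogeneous with dθ = 0, then [ω,θ]_D is exact; explicitly, [dζ, θ]_D = d( ζ·D(θ) − (−1)^{|ζ||θ|} θ·D(ζ) ). -/

import Mathlib

/-- The sign `(-1)^{ij}` in a field `K`, for parities `i j : ZMod 2`. -/
def sg (K : Type*) [Field K] (i j : ZMod 2) : K := (-1) ^ (i.val * j.val)

/-- let `A` be an associative supercommutative superalgebra over a field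
`K` of characteristic zero, `d` and `iota` odd anti-derivations of `A` with `d∘d = 0`,
and `D = d∘iota + iota∘d`. If `ω = dζ` is exact (`ζ` homogeneous of parity `k`, so
`|ω| = k+1`) and `θ` is homogeneous of parity `j` with `dθ = 0`, then `[ω,θ]_D` is
exact; explicitly, `[dζ,θ]_D = d(ζ·D(θ) − (−1)^{|ζ||θ|} θ·D(ζ))`. -/
theorem bracket_of_exact_is_exact
    {K A : Type*} [Field K] [CharZero K] [Ring A] [Algebra K A]
    (𝒜 : ZMod 2 → Submodule K A) [GradedAlgebra 𝒜]
    (hcomm : ∀ (i j : ZMod 2) (u v : A), u ∈ 𝒜 i → v ∈ 𝒜 j →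
      u * v = sg K i j • (v * u))
    (d iota : A →ₗ[K] A)
    (hd_mem : ∀ (i : ZMod 2) (u : A), u ∈ 𝒜 i → d u ∈ 𝒜 (i + 1))
    (hiota_mem : ∀ (i : ZMod 2) (u : A), u ∈ 𝒜 i → iota u ∈ 𝒜 (i + 1))
    (hd_leib : ∀ (i j : ZMod 2) (u v : A), u ∈ 𝒜 i → v ∈ 𝒜 j →
      d (u * v) = d u * v + ((-1 : K) ^ i.val) • (u * d v))
    (hiota_leib : ∀ (i j : ZMod 2) (u v : A), u ∈ 𝒜 i → v ∈ 𝒜 j →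
      iota (u * v) = iota u * v + ((-1 : K) ^ i.val) • (u * iota v))
    (hdd : ∀ u : A, d (d u) = 0)
    (k j : ZMod 2) (ζ θ : A) (hζ : ζ ∈ 𝒜 k) (hθ : θ ∈ 𝒜 j)
    (hθclosed : d θ = 0) :
    d ζ * (d (iota θ) + iota (d θ))
        - sg K (k + 1) j • (θ * (d (iota (d ζ)) + iota (d (d ζ))))
      = d (ζ * (d (iota θ) + iota (d θ))
          - sg K k j • (θ * (d (iota ζ) + iota (d ζ)))) := by

  have h2 : ∀ m : ZMod 2, m + 1 + 1 = m := by decide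
  have hsg : sg K (k + 1) j = (-1 : K) ^ j.val * sg K k j := by
    have key : ∀ a b : ZMod 2, (a + 1).val * b.val % 2 = (b.val + a.val * b.val) % 2 := by decide
    unfold sg
    rw [← pow_add, neg_one_pow_eq_pow_mod_two, key, ← neg_one_pow_eq_pow_mod_two]
  have hιθ := hiota_mem j θ hθ
  have hdιθ : d (iota θ) ∈ 𝒜 j := by
    have := hd_mem _ _ hιθ; rwa [h2] at this
  have hX : d (iota ζ) + iota (d ζ) ∈ 𝒜 k := by
    have h1 := hd_mem _ _ (hiota_mem _ _ hζ)
    have h3 := hiota_mem _ _ (hd_mem _ _ hζ)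
    rw [h2] at h1 h3
    exact Submodule.add_mem _ h1 h3
  rw [hθclosed, map_zero, add_zero, hdd, map_zero, add_zero,
    map_sub, map_smul, hd_leib k j ζ (d (iota θ)) hζ hdιθ, hdd,
    mul_zero, smul_zero, add_zero,
    hd_leib j k θ _ hθ hX, hθclosed, zero_mul, zero_add,
    map_add, hdd, zero_add, smul_smul, mul_comm, ← hsg]
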